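/- Let H = (V, E) be a hypergraph, let t ≥ 2 and m be natural numbers, and suppose there exists a coloring φ : V → {red, blue} such that every hyperedge e ∈ E with |e| ≥ m contains a red vertex and a blue vertex. Then there exists a coloring ξ of the t-element subsets of V with two colors (odd and even) such that every hyperedge e ∈ E with |e| ≥ max(m, t+1) contains a t-element subset colored odd and a t-element subset colored even. In particular, f_H(t, 2) ≤ max(f_H(1, 2), t+1). -/

import Mathlib

private lemma build_subset {α : Type*} [DecidableEq α] (φ : α → Bool) (e : Finset α)
    (t j : ℕ)
    (ha : j ≤ (e.filter (fun v => φ v)).card)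
    (hb : t - j ≤ (e.filter (fun v => ¬ φ v)).card) (hj : j ≤ t) :
    ∃ T ⊆ e, T.card = t ∧ (T.filter (fun v => φ v)).card = j := by
  obtain ⟨A, hA, hAcard⟩ := Finset.exists_subset_card_eq ha
  obtain ⟨B, hB, hBcard⟩ := Finset.exists_subset_card_eq hb
  have hAφ : ∀ v ∈ A, φ v := fun v hv => (Finset.mem_filter.1 (hA hv)).2
  have hBφ : ∀ v ∈ B, ¬ φ v := fun v hv => (Finset.mem_filter.1 (hB hv)).2
  have hdis : Disjoint A B := by
    rw [Finset.disjoint_left]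
    intro v hvA hvB
    exact hBφ v hvB (hAφ v hvA)
  refine ⟨A ∪ B, ?_, ?_, ?_⟩
  · intro v hv
    rcases Finset.mem_union.1 hv with h | h
    · exact Finset.filter_subset _ _ (hA h)
    · exact Finset.filter_subset _ _ (hB h)
  · rw [Finset.card_union_of_disjoint hdis, hAcard, hBcard]
    omega
  · have : (A ∪ B).filter (fun v => φ v) = A := by
      rw [Finset.filter_union]
      rw [Finset.filter_true_of_mem hAφ, Finset.filter_false_of_mem hBφ,
        Finset.union_empty]
    rw [this, hAcard]

/-- If the vertices of a hypergraph can be 2-colored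
(red/blue) so that every hyperedge with at least `m` vertices contains both
colors, then for any `t ≥ 2` the `t`-element subsets can be 2-colored
(odd/even) so that every hyperedge with at least `max m (t+1)` vertices
contains a `t`-element subset of each of the two colors.
(Hence `f_H(t,2) ≤ max (f_H(1,2)) (t+1)`.) -/
theorem bichromatic_tuple_coloring
    {α : Type*} (E : Set (Finset α)) (t m : ℕ) (ht : 2 ≤ t)
    (φ : α → Bool)
    (hφ : ∀ e ∈ E, m ≤ e.card →
      (∃ v ∈ e, φ v = true) ∧ (∃ v ∈ e, φ v = false)) :
    ∃ ξ : Finset α → Bool,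
      ∀ e ∈ E, max m (t + 1) ≤ e.card →
        (∃ T ⊆ e, T.card = t ∧ ξ T = true) ∧
        (∃ T ⊆ e, T.card = t ∧ ξ T = false) := by
  classical
  refine ⟨fun T => decide ((T.filter (fun v => φ v)).card % 2 = 1), ?_⟩
  intro e he hcard
  rw [max_le_iff] at hcard
  obtain ⟨⟨v, hv, hvφ⟩, ⟨w, hw, hwφ⟩⟩ := hφ e he hcard.1
  set a := (e.filter (fun v => φ v)).card with ha_def
  set b := (e.filter (fun v => ¬ φ v)).card with hb_def
  have hab : a + b = e.card := Finset.card_filter_add_card_filter_not _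
  have ha1 : 1 ≤ a := Finset.card_pos.2 ⟨v, Finset.mem_filter.2 ⟨hv, hvφ⟩⟩
  have hb1 : 1 ≤ b := Finset.card_pos.2 ⟨w, Finset.mem_filter.2 ⟨hw, by simp [hwφ]⟩⟩
  have htc : t + 1 ≤ e.card := hcard.2
  set j := t - min t b with hj_def
  obtain ⟨T, hTe, hTc, hTj⟩ := build_subset φ e t j (by omega) (by omega) (by omega)
  obtain ⟨T', hTe', hTc', hTj'⟩ := build_subset φ e t (j + 1) (by omega) (by omega) (by omega)
  by_cases hpar : j % 2 = 1
  · refine ⟨⟨T, hTe, hTc, by simp [hTj, hpar]⟩, ⟨T', hTe', hTc', by simp [hTj']; omega⟩⟩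
  · refine ⟨⟨T', hTe', hTc', by simp [hTj']; omega⟩, ⟨T, hTe, hTc, by simp [hTj, hpar]⟩⟩
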